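/- With r = p/q as above (p monic degree d with simple roots λ_j, deg q < d, q(λ_j) ≠ 0), for any λ with q(λ) ≠ 0 and any z with q(z) ≠ 0, z ∉ {λ_j}, z ≠ λ, the divided difference satisfies (r(λ) − r(z))/(λ − z) = Σ_{j=1}^d δ_j(z) · r(λ)/(λ − λ_j), where δ_j(z) = r(z)/(r'(λ_j)(z−λ_j)). -/

import Mathlib

open Polynomial Finset

theorem divided_difference_decomposition (d : ℕ) (hd : 1 ≤ d) (p q : Polynomial ℂ)
    (hp : p.Monic) (hdeg : p.natDegree = d) (lam : Fin d → ℂ)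
    (hinj : Function.Injective lam) (hroot : ∀ i, p.eval (lam i) = 0)
    (hqdeg : q.degree < (d : WithBot ℕ)) (hql : ∀ j, q.eval (lam j) ≠ 0)
    (μ : ℂ) (hμq : q.eval μ ≠ 0) (hμl : ∀ j, μ ≠ lam j)
    (z : ℂ) (hz : q.eval z ≠ 0) (hzl : ∀ j, z ≠ lam j) (hμz : μ ≠ z) :
    (p.eval μ / q.eval μ - p.eval z / q.eval z) / (μ - z) =
      ∑ j, ((p.eval z / q.eval z) /
          ((p.derivative.eval (lam j) / q.eval (lam j)) * (z - lam j))) *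
        ((p.eval μ / q.eval μ) / (μ - lam j)) := by
  classical
  have hinjOn : Set.InjOn lam (univ : Finset (Fin d)) := fun a _ b _ h => hinj h
  have hcard : (#(univ : Finset (Fin d)) : WithBot ℕ) = (d : WithBot ℕ) := by simp
  -- p is the nodal polynomial
  have h1 : p.degree = (d : WithBot ℕ) := by
    rw [Polynomial.degree_eq_natDegree hp.ne_zero, hdeg]
  have h2 : (Lagrange.nodal univ lam).degree = (d : WithBot ℕ) := by
    rw [Lagrange.degree_nodal]; simp
  have hpn : p = Lagrange.nodal univ lam := by
    apply Polynomial.eq_of_degree_sub_lt_of_eval_index_eq univ hinjOn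
    · rw [hcard]
      calc (p - Lagrange.nodal univ lam).degree < p.degree :=
            Polynomial.degree_sub_lt (by rw [h1, h2]) hp.ne_zero
              (by rw [hp.leadingCoeff, (Lagrange.nodal_monic).leadingCoeff])
        _ ≤ (d : WithBot ℕ) := le_of_eq h1
    · intro i _
      rw [hroot i, Lagrange.eval_nodal_at_node (mem_univ i)]
  have hμz' : μ - z ≠ 0 := sub_ne_zero_of_ne hμz
  have hpzne : p.eval z ≠ 0 := by
    rw [hpn]; exact Lagrange.eval_nodal_not_at_node fun i _ => hzl i
  have hpμne : p.eval μ ≠ 0 := by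
    rw [hpn]; exact Lagrange.eval_nodal_not_at_node fun i _ => hμl i
  set w : Fin d → ℂ := fun j => Lagrange.nodalWeight univ lam j with hw
  have hwne : ∀ j, w j ≠ 0 := fun j => Lagrange.nodalWeight_ne_zero hinjOn (mem_univ j)
  have hder : ∀ j, p.derivative.eval (lam j) = (w j)⁻¹ := by
    intro j
    simp only [hpn, hw, Lagrange.nodalWeight_eq_eval_derivative_nodal (mem_univ j), inv_inv]
  -- partial fractions via barycentric Lagrange interpolation
  have key : ∀ x : ℂ, (∀ j, x ≠ lam j) →
      q.eval x = p.eval x * ∑ j, w j * (x - lam j)⁻¹ * q.eval (lam j) := by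
    intro x hx
    have hq : q = Lagrange.interpolate univ lam fun i => q.eval (lam i) :=
      Lagrange.eq_interpolate hinjOn (by rw [hcard]; exact hqdeg)
    conv_lhs => rw [hq]
    rw [Lagrange.eval_interpolate_not_at_node _ fun i _ => hx i, hpn]
  have keyz := key z hzl
  have keyμ := key μ hμl
  -- rewrite each summand
  have hterm : ∀ j : Fin d,
      ((p.eval z / q.eval z) /
          ((p.derivative.eval (lam j) / q.eval (lam j)) * (z - lam j))) *
        ((p.eval μ / q.eval μ) / (μ - lam j)) =
      (p.eval z * p.eval μ / (q.eval z * q.eval μ * (μ - z))) *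
        (w j * (z - lam j)⁻¹ * q.eval (lam j) - w j * (μ - lam j)⁻¹ * q.eval (lam j)) := by
    intro j
    have h1 : z - lam j ≠ 0 := sub_ne_zero_of_ne (hzl j)
    have h2 : μ - lam j ≠ 0 := sub_ne_zero_of_ne (hμl j)
    rw [hder j]
    field_simp
    ring
  rw [Finset.sum_congr rfl fun j _ => hterm j, ← Finset.mul_sum,
    Finset.sum_sub_distrib]
  have hsz : (∑ j, w j * (z - lam j)⁻¹ * q.eval (lam j)) = q.eval z / p.eval z := by
    rw [keyz]; field_simp
  have hsμ : (∑ j, w j * (μ - lam j)⁻¹ * q.eval (lam j)) = q.eval μ / p.eval μ := by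
    rw [keyμ]; field_simp
  rw [hsz, hsμ]
  field_simp
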